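/- arXiv:0907.0449 — 2 statements merged into one kernel-verified Lean document; each statement's English description precedes it below -/
import Mathlib

section
/- For the cavity process, for every T ≥ 0 the covariance matrix C_T = {C(t,s)}_{t,s≤T} is strictly positive definite, and every trajectory has positive probability: P(σ_0^T = ω_0^T) > 0 for each ω_0^T ∈ {−1,+1}^{T+1}. -/
open MeasureTheory ProbabilityTheory

/-- Standard Gaussian measure on ℝ^n. -/
noncomputable def stdGaussian (n : ℕ) : Measure (Fin n → ℝ) :=
  Measure.pi fun _ => gaussianReal 0 1

/-- Sample space of the effective process: a uniform ±1 sign (for σ(0)) together with an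
n-dimensional standard Gaussian vector (used to produce η with covariance C = A Aᵀ). -/
noncomputable def effMeasure (n : ℕ) : Measure (Bool × (Fin n → ℝ)) :=
  ((PMF.uniformOfFintype Bool).toMeasure).prod (stdGaussian n)

/-- The effective process: σ(0) uniform ±1, η(t) = (A g)(t) with g standard Gaussian
(so η is centered Gaussian with covariance A Aᵀ), and
σ(t+1) = sign(η(t) + Σ_{s<t} R(t,s) σ(s) + h(t)). -/
noncomputable def effTraj (n : ℕ) (A : Matrix (Fin n) (Fin n) ℝ) (R : ℕ → ℕ → ℝ)
    (h : ℕ → ℝ) (ω : Bool × (Fin n → ℝ)) : ℕ → ℝ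
  | 0 => if ω.1 then 1 else -1
  | t + 1 =>
      Real.sign ((if ht : t < n then ∑ j, A ⟨t, ht⟩ j * ω.2 j else 0)
        + (∑ s ∈ (Finset.range t).attach, R t s.1 * effTraj n A R h ω s.1) + h t)
  decreasing_by exact Nat.lt_succ_of_lt (Finset.mem_range.mp s.2)

/-- `IsCavityPair C R T` : (C,R) satisfy the defining self-consistency equations of the
cavity process up to time T: C is a symmetric positive semidefinite correlation function
with C(t,t)=1, R(t,s)=0 for t ≤ s, and for every matrix A with A Aᵀ = C_T (so that the
effective process built from A has Gaussian field of covariance C_T):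
C(t,s) = E[σ(t)σ(s)] for t,s ≤ T, and R(t,s) = ∂_{h(s)} E_{C,R,h}[σ(t)] |_{h=0}
for s < t ≤ T. -/
def IsCavityPair (C R : ℕ → ℕ → ℝ) (T : ℕ) : Prop :=
  (∀ t ≤ T, C t t = 1) ∧
  (∀ s ≤ T, ∀ t ≤ T, C t s = C s t) ∧
  (∀ a : Fin (T + 1) → ℝ, 0 ≤ ∑ t, ∑ s, a t * C t.1 s.1 * a s) ∧
  (∀ t s, t ≤ s → R t s = 0) ∧
  ∀ A : Matrix (Fin (T + 1)) (Fin (T + 1)) ℝ,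
    (∀ t s : Fin (T + 1), (A * A.transpose) t s = C t.1 s.1) →
    (∀ t ≤ T, ∀ s ≤ T,
      C t s = ∫ ω, effTraj (T + 1) A R (fun _ => 0) ω t *
        effTraj (T + 1) A R (fun _ => 0) ω s ∂ effMeasure (T + 1)) ∧
    (∀ s t, t ≤ T → s < t →
      HasDerivAt (fun x : ℝ =>
        ∫ ω, effTraj (T + 1) A R (fun u => if u = s then x else 0) ω t
          ∂ effMeasure (T + 1)) (R t s) 0)

instance gaussOpenPos : Measure.IsOpenPosMeasure (gaussianReal 0 1) := by
  constructor
  intro U hU hne h0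
  exact (hU.measure_pos volume hne).ne' (gaussianReal_absolutelyContinuous' 0 one_ne_zero h0)

instance (n : ℕ) : Measure.IsOpenPosMeasure (_root_.stdGaussian n) := by
  unfold _root_.stdGaussian; infer_instance

instance (n : ℕ) : IsProbabilityMeasure (_root_.stdGaussian n) := by
  unfold _root_.stdGaussian; infer_instance

instance (n : ℕ) : IsProbabilityMeasure (effMeasure n) := by
  unfold effMeasure; infer_instance

lemma measurable_realSign : Measurable Real.sign := by
  unfold Real.sign
  refine Measurable.ite (measurableSet_lt measurable_id measurable_const) measurable_const ?_
  exact Measurable.ite (measurableSet_lt measurable_const measurable_id) measurable_const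
    measurable_const

lemma effTraj_zero (n A R h ω) : effTraj n A R h ω 0 = if ω.1 then 1 else -1 := by
  simp [effTraj]

lemma effTraj_succ (n A R h ω t) : effTraj n A R h ω (t+1) =
    Real.sign ((if ht : t < n then ∑ j, A ⟨t, ht⟩ j * ω.2 j else 0)
        + (∑ s ∈ (Finset.range t).attach, R t s.1 * effTraj n A R h ω s.1) + h t) := by
  rw [effTraj]

lemma effTraj_measurable (n A R h) : ∀ t, Measurable (fun ω => effTraj n A R h ω t) := by
  intro t
  induction t using Nat.strong_induction_on with
  | _ t ih =>
    match t with
    | 0 =>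
      simp only [effTraj_zero]
      exact Measurable.ite (measurable_fst (measurableSet_singleton true)) measurable_const
        measurable_const
    | t + 1 =>
      simp only [effTraj_succ]
      refine measurable_realSign.comp ?_
      refine Measurable.add (Measurable.add ?_ ?_) measurable_const
      · split
        · exact Finset.measurable_sum _ fun j _ =>
            (measurable_const.mul ((measurable_pi_apply j).comp measurable_snd))
        · exact measurable_const
      · exact Finset.measurable_sum _ fun s _ =>
          measurable_const.mul (ih s.1 (Nat.lt_succ_of_lt (Finset.mem_range.mp s.2)))

lemma realSign_abs_le (x : ℝ) : |Real.sign x| ≤ 1 := by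
  rcases lt_trichotomy x 0 with hx | hx | hx
  · rw [Real.sign_of_neg hx]; norm_num
  · simp [hx, Real.sign_zero]
  · rw [Real.sign_of_pos hx]; norm_num

lemma effTraj_abs_le (n A R h ω) : ∀ t, |effTraj n A R h ω t| ≤ 1 := by
  intro t
  match t with
  | 0 => rw [effTraj_zero]; split <;> norm_num
  | t + 1 => rw [effTraj_succ]; exact realSign_abs_le _

lemma effTraj_mul_integrable (n A R h t s) :
    Integrable (fun ω => effTraj n A R h ω t * effTraj n A R h ω s) (effMeasure n) := by
  refine ⟨((effTraj_measurable n A R h t).mul (effTraj_measurable n A R h s)).aestronglyMeasurable, ?_⟩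
  refine HasFiniteIntegral.of_bounded (C := 1) (ae_of_all _ fun ω => ?_)
  rw [Real.norm_eq_abs, abs_mul]
  exact mul_le_one₀ (effTraj_abs_le n A R h ω t) (abs_nonneg _) (effTraj_abs_le n A R h ω s)

lemma sign_eq_of_pos_mul {ε y : ℝ} (hε : ε = 1 ∨ ε = -1) (h : 0 < ε * y) :
    Real.sign y = ε := by
  rcases hε with h1 | h1 <;> subst h1
  · rw [one_mul] at h; exact Real.sign_of_pos h
  · rw [Real.sign_of_neg (by nlinarith)]

lemma traj_pos (C R : ℕ → ℕ → ℝ) (T : ℕ)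
    (hpd : ∀ a : Fin T → ℝ, a ≠ 0 → 0 < ∑ t, ∑ s, a t * C t.1 s.1 * a s)
    (A : Matrix (Fin (T + 1)) (Fin (T + 1)) ℝ)
    (hA : ∀ t s : Fin (T + 1), (A * A.transpose) t s = C t.1 s.1)
    (ωtr : Fin (T + 1) → ℝ) (hω : ∀ t, ωtr t = 1 ∨ ωtr t = -1) :
    0 < effMeasure (T + 1)
      {ω | ∀ t : Fin (T + 1), effTraj (T + 1) A R (fun _ => 0) ω t.1 = ωtr t} := by
  classical
  set B : Matrix (Fin T) (Fin (T + 1)) ℝ := A.submatrix Fin.castSucc id with hB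
  set G : Matrix (Fin T) (Fin T) ℝ := B * B.transpose with hGdef
  have hGC : ∀ t s : Fin T, G t s = C t.1 s.1 := by
    intro t s
    have : G t s = (A * A.transpose) (Fin.castSucc t) (Fin.castSucc s) := by
      simp [hGdef, hB, Matrix.mul_apply, Matrix.submatrix, Matrix.transpose_apply]
    rw [this, hA]
    rfl
  have hG : G.PosDef := by
    refine Matrix.posDef_iff_dotProduct_mulVec.mpr ⟨?_, ?_⟩
    · have : G.transpose = G := by
        rw [hGdef, Matrix.transpose_mul, Matrix.transpose_transpose]
      rw [Matrix.IsHermitian, Matrix.conjTranspose]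
      convert this using 1
      ext i j
      simp
    · intro x hx
      have hq : dotProduct (star x) (G.mulVec x) = ∑ t, ∑ s, x t * C t.1 s.1 * x s := by
        simp only [star_trivial, dotProduct, Matrix.mulVec, Finset.mul_sum]
        refine Finset.sum_congr rfl fun t _ => Finset.sum_congr rfl fun s _ => ?_
        rw [hGC]; ring
      rw [hq]
      exact hpd x hx
  have hdet : IsUnit G.det := isUnit_iff_ne_zero.mpr hG.det_pos.ne'
  have hsurj : ∀ v : Fin T → ℝ, ∃ g : Fin (T + 1) → ℝ, B.mulVec g = v := by
    intro v
    refine ⟨B.transpose.mulVec (G⁻¹.mulVec v), ?_⟩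
    rw [Matrix.mulVec_mulVec, Matrix.mulVec_mulVec, ← hGdef,
      Matrix.mul_nonsing_inv G hdet, Matrix.one_mulVec]
  -- drift terms
  set cc : Fin T → ℝ := fun t => ∑ s ∈ (Finset.range t.1).attach,
    R t.1 s.1 * ωtr ⟨s.1, lt_trans (Finset.mem_range.mp s.2) (Nat.lt_succ_of_lt t.2)⟩ with hcc
  obtain ⟨g₀, hg₀⟩ := hsurj (fun t => ωtr t.succ - cc t)
  set U : Set (Fin (T + 1) → ℝ) :=
    {g | ∀ t : Fin T, 0 < ωtr t.succ * ((B.mulVec g) t + cc t)} with hU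
  have hg₀U : g₀ ∈ U := by
    intro t
    rw [hg₀]
    have : ωtr t.succ - cc t + cc t = ωtr t.succ := by ring
    rw [this]
    rcases hω t.succ with h1 | h1 <;> rw [h1] <;> norm_num
  have hUopen : IsOpen U := by
    rw [hU, Set.setOf_forall]
    refine isOpen_iInter_of_finite fun t => ?_
    have hcont : Continuous fun g : Fin (T + 1) → ℝ =>
        ωtr t.succ * ((B.mulVec g) t + cc t) := by
      refine continuous_const.mul (Continuous.add ?_ continuous_const)
      simp only [Matrix.mulVec, dotProduct]
      exact continuous_finset_sum _ fun j _ => continuous_const.mul (continuous_apply j)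
    exact isOpen_lt continuous_const hcont
  set b₀ : Bool := decide (ωtr 0 = 1) with hb₀
  -- inclusion
  have hincl : ({b₀} ×ˢ U : Set (Bool × (Fin (T+1) → ℝ))) ⊆
      {ω | ∀ t : Fin (T + 1), effTraj (T + 1) A R (fun _ => 0) ω t.1 = ωtr t} := by
    rintro ⟨b, g⟩ ⟨hb, hg⟩
    simp only [Set.mem_singleton_iff] at hb
    subst hb
    intro t
    obtain ⟨t, ht⟩ := t
    induction t using Nat.strong_induction_on with
    | _ t ih =>
      match t with
      | 0 =>
        rw [effTraj_zero]
        simp only [hb₀]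
        rcases hω 0 with h1 | h1 <;> rw [show (⟨0, ht⟩ : Fin (T+1)) = 0 from rfl, h1] <;>
          norm_num
      | t + 1 =>
        have htT : t < T := Nat.lt_of_succ_lt_succ ht
        set tF : Fin T := ⟨t, htT⟩ with htF
        rw [effTraj_succ]
        have hrow : (if h' : t < T + 1 then ∑ j, A ⟨t, h'⟩ j * (b₀, g).2 j else 0)
            = (B.mulVec g) tF := by
          rw [dif_pos (Nat.lt_succ_of_lt htT)]
          rfl
        have hsum : (∑ s ∈ (Finset.range t).attach,
            R t s.1 * effTraj (T+1) A R (fun _ => 0) (b₀, g) s.1) = cc tF := by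
          rw [hcc]
          refine Finset.sum_congr rfl fun s _ => ?_
          congr 1
          exact ih s.1 (Nat.lt_succ_of_lt (Finset.mem_range.mp s.2)) _
        rw [hrow, hsum, add_zero]
        exact sign_eq_of_pos_mul (hω _) (hg tF)
  -- measure bound
  refine lt_of_lt_of_le ?_ (measure_mono hincl)
  rw [effMeasure, Measure.prod_prod]
  refine ENNReal.mul_pos ?_ (hUopen.measure_pos _ ⟨g₀, hg₀U⟩).ne'
  intro h0
  rw [PMF.toMeasure_apply_singleton _ b₀ (measurableSet_singleton b₀),
    PMF.uniformOfFintype_apply] at h0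
  simp at h0

open scoped MatrixOrder in
lemma pd_step (C R : ℕ → ℕ → ℝ) (T : ℕ) (hcav : IsCavityPair C R T)
    (htraj : ∀ A : Matrix (Fin (T + 1)) (Fin (T + 1)) ℝ,
      (∀ t s : Fin (T + 1), (A * A.transpose) t s = C t.1 s.1) →
      ∀ ωtr : Fin (T + 1) → ℝ, (∀ t, ωtr t = 1 ∨ ωtr t = -1) →
        0 < effMeasure (T + 1)
          {ω | ∀ t : Fin (T + 1), effTraj (T + 1) A R (fun _ => 0) ω t.1 = ωtr t}) :
    ∀ a : Fin (T + 1) → ℝ, a ≠ 0 → 0 < ∑ t, ∑ s, a t * C t.1 s.1 * a s := by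
  classical
  intro a ha
  obtain ⟨hC1, hCsymm, hCpsd, hR0, hkey⟩ := hcav
  have hMps : (Matrix.of (fun t s : Fin (T+1) => C t.1 s.1)).PosSemidef := by
    refine Matrix.posSemidef_iff_dotProduct_mulVec.mpr ⟨?_, ?_⟩
    · ext t s
      simp only [Matrix.conjTranspose_apply, Matrix.of_apply, star_trivial]
      exact hCsymm t.1 (Nat.le_of_lt_succ t.2) s.1 (Nat.le_of_lt_succ s.2)
    · intro x
      have hq : dotProduct (star x)
          ((Matrix.of (fun t s : Fin (T+1) => C t.1 s.1)).mulVec x)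
          = ∑ t, ∑ s, x t * C t.1 s.1 * x s := by
        simp only [star_trivial, dotProduct, Matrix.mulVec, Finset.mul_sum]
        refine Finset.sum_congr rfl fun t _ => Finset.sum_congr rfl fun s _ => ?_
        simp only [Matrix.of_apply]; ring
      rw [hq]
      exact hCpsd x
  set A := CFC.sqrt (Matrix.of (fun t s : Fin (T+1) => C t.1 s.1)) with hAdef
  have hAT : A.transpose = A := by
    have h2 : A.IsHermitian := (CFC.sqrt_nonneg _).isSelfAdjoint
    ext i j
    have h3 := congrFun (congrFun h2 i) j
    simpa [Matrix.conjTranspose_apply] using h3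
  have hAAT : ∀ t s : Fin (T+1), (A * A.transpose) t s = C t.1 s.1 := by
    intro t s
    rw [hAT, hAdef, CFC.sqrt_mul_sqrt_self _ (Matrix.nonneg_iff_posSemidef.mpr hMps)]
    rfl
  obtain ⟨hcov, -⟩ := hkey A hAAT
  have key : ∑ t, ∑ s, a t * C t.1 s.1 * a s
      = ∫ ω, (∑ t : Fin (T+1), a t * effTraj (T + 1) A R (fun _ => 0) ω t.1)^2
          ∂ effMeasure (T + 1) := by
    have expand : ∀ ω, (∑ t : Fin (T+1), a t * effTraj (T + 1) A R (fun _ => 0) ω t.1)^2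
        = ∑ t : Fin (T+1), ∑ s : Fin (T+1), (a t * a s) *
            (effTraj (T + 1) A R (fun _ => 0) ω t.1 * effTraj (T + 1) A R (fun _ => 0) ω s.1) := by
      intro ω
      rw [sq, Finset.sum_mul_sum]
      exact Finset.sum_congr rfl fun t _ => Finset.sum_congr rfl fun s _ => by ring
    simp_rw [expand]
    have hint2 : ∀ (t s : Fin (T+1)), Integrable (fun ω => (a t * a s) *
        (effTraj (T + 1) A R (fun _ => 0) ω t.1 * effTraj (T + 1) A R (fun _ => 0) ω s.1))
        (effMeasure (T + 1)) :=
      fun t s => (effTraj_mul_integrable _ _ _ _ _ _).const_mul _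
    rw [integral_finset_sum _ (fun t _ => integrable_finset_sum _ (fun s _ => hint2 t s))]
    refine Finset.sum_congr rfl fun t _ => ?_
    rw [integral_finset_sum _ (fun s _ => hint2 t s)]
    refine Finset.sum_congr rfl fun s _ => ?_
    rw [MeasureTheory.integral_const_mul, ← hcov t.1 (Nat.le_of_lt_succ t.2) s.1
      (Nat.le_of_lt_succ s.2)]
    ring
  by_contra hle
  push_neg at hle
  set ωtr : Fin (T+1) → ℝ := fun t => if 0 ≤ a t then 1 else -1 with hωtr
  have hωpm : ∀ t, ωtr t = 1 ∨ ωtr t = -1 := fun t => by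
    rw [hωtr]; dsimp only; split; exacts [Or.inl rfl, Or.inr rfl]
  have hEpos := htraj A hAAT ωtr hωpm
  have hEmeas : MeasurableSet
      {ω | ∀ t : Fin (T + 1), effTraj (T + 1) A R (fun _ => 0) ω t.1 = ωtr t} := by
    rw [Set.setOf_forall]
    exact MeasurableSet.iInter fun t =>
      (effTraj_measurable _ _ _ _ t.1) (measurableSet_singleton (ωtr t))
  have hs0pos : 0 < ∑ t, |a t| := by
    have hex : ∃ t, a t ≠ 0 := by
      by_contra hc; push_neg at hc; exact ha (funext hc)
    obtain ⟨t0, ht0⟩ := hex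
    exact Finset.sum_pos' (fun t _ => abs_nonneg _) ⟨t0, Finset.mem_univ _, abs_pos.mpr ht0⟩
  have honE : Set.EqOn (fun ω => (∑ t : Fin (T+1), a t * effTraj (T + 1) A R (fun _ => 0) ω t.1)^2)
      (fun _ => (∑ t, |a t|)^2)
      {ω | ∀ t : Fin (T + 1), effTraj (T + 1) A R (fun _ => 0) ω t.1 = ωtr t} := by
    intro ω hω'
    simp only
    congr 1
    refine Finset.sum_congr rfl fun t _ => ?_
    rw [hω' t, hωtr]
    dsimp only
    split
    · rw [mul_one, abs_of_nonneg ‹_›]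
    · rw [abs_of_neg (lt_of_not_ge ‹_›)]; ring
  have hfm : Measurable (fun ω => (∑ t : Fin (T+1), a t *
      effTraj (T + 1) A R (fun _ => 0) ω t.1)^2) := by
    apply Measurable.pow_const
    exact Finset.measurable_sum _ fun t _ => measurable_const.mul (effTraj_measurable _ _ _ _ t.1)
  have hfb : ∀ ω, ‖(∑ t : Fin (T+1), a t * effTraj (T + 1) A R (fun _ => 0) ω t.1)^2‖
      ≤ (∑ t, |a t|)^2 := by
    intro ω
    rw [Real.norm_eq_abs, abs_pow]
    have habs : |∑ t : Fin (T+1), a t * effTraj (T + 1) A R (fun _ => 0) ω t.1| ≤ ∑ t, |a t| := by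
      refine le_trans (Finset.abs_sum_le_sum_abs _ _) (Finset.sum_le_sum fun t _ => ?_)
      rw [abs_mul]
      calc |a t| * |effTraj (T + 1) A R (fun _ => 0) ω t.1| ≤ |a t| * 1 :=
            mul_le_mul_of_nonneg_left (effTraj_abs_le _ _ _ _ _ _) (abs_nonneg _)
        _ = |a t| := mul_one _
    exact pow_le_pow_left₀ (abs_nonneg _) habs 2
  have hfint : Integrable (fun ω => (∑ t : Fin (T+1), a t *
      effTraj (T + 1) A R (fun _ => 0) ω t.1)^2) (effMeasure (T + 1)) :=
    ⟨hfm.aestronglyMeasurable, HasFiniteIntegral.of_bounded (ae_of_all _ hfb)⟩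
  have h1 := setIntegral_le_integral (s := {ω | ∀ t : Fin (T + 1), effTraj (T + 1) A R (fun _ => 0) ω t.1 = ωtr t}) hfint (ae_of_all _ fun ω => sq_nonneg
    (∑ t : Fin (T+1), a t * effTraj (T + 1) A R (fun _ => 0) ω t.1))
  have h2 : ∫ ω in {ω | ∀ t : Fin (T + 1), effTraj (T + 1) A R (fun _ => 0) ω t.1 = ωtr t},
      (∑ t : Fin (T+1), a t * effTraj (T + 1) A R (fun _ => 0) ω t.1)^2 ∂ effMeasure (T + 1)
      = (∑ t, |a t|)^2 * (effMeasure (T + 1)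
          {ω | ∀ t : Fin (T + 1), effTraj (T + 1) A R (fun _ => 0) ω t.1 = ωtr t}).toReal := by
    rw [setIntegral_congr_fun hEmeas honE, setIntegral_const, smul_eq_mul, measureReal_def]
    ring
  have h3 : 0 < (effMeasure (T + 1)
      {ω | ∀ t : Fin (T + 1), effTraj (T + 1) A R (fun _ => 0) ω t.1 = ωtr t}).toReal :=
    ENNReal.toReal_pos hEpos.ne' (measure_ne_top _ _)
  nlinarith [sq_nonneg (∑ t, |a t|), mul_pos (pow_pos hs0pos 2) h3]

/-- for the cavity process, every covariance matrix C_T is strictly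
positive definite, and every spin trajectory ω ∈ {±1}^{T+1} has strictly positive
probability under the cavity process. -/
theorem cavity_nondegenerate (C R : ℕ → ℕ → ℝ) (hcav : ∀ T, IsCavityPair C R T)
    (T : ℕ) :
    (∀ a : Fin (T + 1) → ℝ, a ≠ 0 → 0 < ∑ t, ∑ s, a t * C t.1 s.1 * a s) ∧
    (∀ A : Matrix (Fin (T + 1)) (Fin (T + 1)) ℝ,
      (∀ t s : Fin (T + 1), (A * A.transpose) t s = C t.1 s.1) →
      ∀ ωtr : Fin (T + 1) → ℝ, (∀ t, ωtr t = 1 ∨ ωtr t = -1) →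
        0 < effMeasure (T + 1)
          {ω | ∀ t : Fin (T + 1), effTraj (T + 1) A R (fun _ => 0) ω t.1 = ωtr t}) := by
  induction T with
  | zero =>
    have htraj := traj_pos C R 0 (fun a ha => absurd (funext fun i => i.elim0) ha)
    exact ⟨pd_step C R 0 (hcav 0) htraj, htraj⟩
  | succ T ih =>
    have htraj := traj_pos C R (T + 1) ih.1
    exact ⟨pd_step C R (T + 1) (hcav (T + 1)) htraj, htraj⟩
end

section
/- The cavity process on the alternate-time (bipartite) structure satisfies: C(t,s) = 0 whenever t and s have different parity, and R(t,s) = 0 whenever t and s have the same parity. -/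
open MeasureTheory ProbabilityTheory

/- ### Auxiliary lemmas -/

lemma epow (k : ℕ) : ((-1 : ℝ)) ^ k = if k % 2 = 0 then 1 else -1 := by
  rcases Nat.even_or_odd k with h | h
  · rw [h.neg_one_pow]; simp [Nat.even_iff.mp h]
  · rw [h.neg_one_pow]
    have hk : k % 2 = 1 := Nat.odd_iff.mp h
    simp [hk]

lemma sign_epow_mul (k : ℕ) (x : ℝ) :
    Real.sign ((-1 : ℝ) ^ k * x) = (-1 : ℝ) ^ k * Real.sign x := by
  rw [epow]
  split_ifs
  · simp
  · rw [neg_one_mul, neg_one_mul, Real.sign_neg]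

/-- Integration against `effMeasure` is invariant under flipping the Boolean coordinate. -/
lemma integral_flip (n : ℕ) (F : Bool × (Fin n → ℝ) → ℝ) :
    ∫ ω, F (!ω.1, ω.2) ∂ effMeasure n = ∫ ω, F ω ∂ effMeasure n := by
  haveI : IsProbabilityMeasure (stdGaussian n) := by
    unfold _root_.stdGaussian; infer_instance
  have hnot : Measurable not := measurable_of_countable _
  have hmap : Measure.map not (PMF.uniformOfFintype Bool).toMeasure
      = (PMF.uniformOfFintype Bool).toMeasure := by
    rw [PMF.toMeasure_map not _ hnot]
    congr 1
    ext b
    rw [PMF.map_apply, tsum_bool]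
    cases b <;> simp [PMF.uniformOfFintype_apply]
  let eb : Bool ≃ᵐ Bool :=
    { toEquiv := ⟨not, not, Bool.not_not, Bool.not_not⟩
      measurable_toFun := hnot
      measurable_invFun := hnot }
  let e : (Bool × (Fin n → ℝ)) ≃ᵐ (Bool × (Fin n → ℝ)) :=
    MeasurableEquiv.prodCongr eb (MeasurableEquiv.refl _)
  have he : ⇑e = Prod.map not id := rfl
  have hmp : MeasurePreserving (⇑e) (effMeasure n) (effMeasure n) := by
    rw [he]
    exact (MeasurePreserving.prod ⟨hnot, hmap⟩ (MeasurePreserving.id _))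
  have h := hmp.integral_comp e.measurableEmbedding F
  have he2 : ∀ ω : Bool × (Fin n → ℝ), e ω = (!ω.1, ω.2) := fun ω => rfl
  simpa [he2] using h

/-- Key pointwise flip identity for trajectories. -/
lemma effTraj_flip (T : ℕ) (R : ℕ → ℕ → ℝ)
    (A A' : Matrix (Fin (T + 1)) (Fin (T + 1)) ℝ) (h h' : ℕ → ℝ)
    (hA' : ∀ (u : ℕ) (hu : u < T + 1), u < T →
      ∀ j, A' ⟨u, hu⟩ j = (-1 : ℝ) ^ u * A ⟨u, hu⟩ j)
    (hh' : ∀ u < T, h' u = (-1 : ℝ) ^ u * h u)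
    (hR : ∀ u v, u < T → v < u → u % 2 = v % 2 → R u v = 0)
    (ω : Bool × (Fin (T + 1) → ℝ)) :
    ∀ t ≤ T, effTraj (T + 1) A' R h' (!ω.1, ω.2) t
      = (-1 : ℝ) ^ (t + 1) * effTraj (T + 1) A R h ω t := by
  intro t
  induction t using Nat.strong_induction_on with
  | _ t IH =>
    intro ht
    match t with
    | 0 =>
      rcases ω with ⟨b, g⟩
      cases b <;> simp [effTraj]
    | t + 1 =>
      have htT : t < T := Nat.lt_of_succ_le ht
      have htn : t < T + 1 := Nat.lt_succ_of_lt htT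
      rw [effTraj, effTraj, dif_pos htn, dif_pos htn]
      have hX : ∑ j, A' ⟨t, htn⟩ j * (!ω.1, ω.2).2 j
          = (-1 : ℝ) ^ t * ∑ j, A ⟨t, htn⟩ j * ω.2 j := by
        rw [Finset.mul_sum]
        exact Finset.sum_congr rfl fun j _ => by rw [hA' t htn htT j]; ring
      have hS : ∑ s ∈ (Finset.range t).attach,
            R t s.1 * effTraj (T + 1) A' R h' (!ω.1, ω.2) s.1
          = (-1 : ℝ) ^ t * ∑ s ∈ (Finset.range t).attach,
            R t s.1 * effTraj (T + 1) A R h ω s.1 := by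
        rw [Finset.mul_sum]
        refine Finset.sum_congr rfl fun s _ => ?_
        have hs : s.1 < t := Finset.mem_range.mp s.2
        rw [IH s.1 (by omega) (by omega)]
        by_cases hp : t % 2 = s.1 % 2
        · rw [hR t s.1 htT hs hp]; ring
        · have hss : (-1 : ℝ) ^ (s.1 + 1) = (-1 : ℝ) ^ t := by
            have hmod : (s.1 + 1) % 2 = t % 2 := by omega
            rw [epow, epow, hmod]
          rw [hss]; ring
      rw [hX, hS, hh' t htT, ← mul_add, ← mul_add, sign_epow_mul]
      have hpp : (-1 : ℝ) ^ (t + 1 + 1) = (-1 : ℝ) ^ t := by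
        have hmod : (t + 1 + 1) % 2 = t % 2 := by omega
        rw [epow, epow, hmod]
      rw [hpp]

lemma euclid_inner {n : ℕ} (a b : EuclideanSpace ℝ (Fin n)) :
    (inner ℝ a b : ℝ) = ∑ j, (WithLp.equiv 2 _) a j * (WithLp.equiv 2 _) b j := by
  simp [PiLp.inner_apply, RCLike.inner_apply, conj_trivial, mul_comm]

open scoped MatrixOrder in
/-- The joint parity statement, proved by induction. -/
lemma cavity_parity_aux (C R : ℕ → ℕ → ℝ) (hcav : ∀ T, IsCavityPair C R T) :
    ∀ n : ℕ, (∀ t s : ℕ, t < n → s < n → t % 2 ≠ s % 2 → C t s = 0) ∧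
      (∀ t s : ℕ, t < n → s < t → t % 2 = s % 2 → R t s = 0) := by
  intro n
  induction n with
  | zero => exact ⟨fun t s ht => by omega, fun t s ht => by omega⟩
  | succ T IH =>
    obtain ⟨h1, h2, h3, h4, h5⟩ := hcav T
    -- the positive semidefinite matrix C_T
    set CM : Matrix (Fin (T + 1)) (Fin (T + 1)) ℝ :=
      Matrix.of (fun t s : Fin (T + 1) => C t.1 s.1) with hCM
    have hPSD : CM.PosSemidef := by
      refine Matrix.posSemidef_iff_dotProduct_mulVec.mpr ⟨?_, ?_⟩
      · ext i j
        simp only [Matrix.conjTranspose_apply, star_trivial, hCM, Matrix.of_apply]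
        exact (h2 i.1 (Nat.lt_succ_iff.mp i.isLt) j.1 (Nat.lt_succ_iff.mp j.isLt))
      · intro x
        calc (0:ℝ) ≤ ∑ t, ∑ s, x t * C t.1 s.1 * x s := h3 x
          _ = dotProduct (star x) (Matrix.mulVec CM x) := by
              simp only [dotProduct, Matrix.mulVec, Pi.star_apply, star_trivial,
                hCM, Matrix.of_apply, Finset.mul_sum]
              exact Finset.sum_congr rfl fun t _ => Finset.sum_congr rfl fun s _ => by ring
    set A : Matrix (Fin (T + 1)) (Fin (T + 1)) ℝ := CFC.sqrt CM with hA
    have hAsym : A.transpose = A := by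
      ext i j
      have hh := congrFun (congrFun (Matrix.nonneg_iff_posSemidef.mp (CFC.sqrt_nonneg CM)).1 i) j
      rw [← hA] at hh
      simp only [Matrix.conjTranspose_apply, star_trivial] at hh
      simpa [Matrix.transpose_apply] using hh
    have hAA : ∀ t s : Fin (T + 1), (A * A.transpose) t s = C t.1 s.1 := by
      intro t s
      rw [hAsym]
      have hsq : A * A = CM := by rw [hA]; exact CFC.sqrt_mul_sqrt_self CM hPSD.nonneg
      rw [hsq]
      rfl
    -- rows of A as Euclidean vectors
    set x : Fin (T + 1) → EuclideanSpace ℝ (Fin (T + 1)) :=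
      fun u => (WithLp.equiv 2 _).symm (A u) with hx
    have hinner : ∀ u v : Fin (T + 1), (inner ℝ (x u) (x v) : ℝ) = C u.1 v.1 := by
      intro u v
      rw [euclid_inner, ← hAA u v]
      simp only [hx, Equiv.apply_symm_apply, Matrix.mul_apply, Matrix.transpose_apply]
    -- reflection negating the odd-indexed rows of A with index < T
    set V : Submodule ℝ (EuclideanSpace ℝ (Fin (T + 1))) :=
      Submodule.span ℝ (x '' {u : Fin (T + 1) | u.1 < T ∧ u.1 % 2 = 1}) with hV
    set Φ : EuclideanSpace ℝ (Fin (T + 1)) ≃ₗᵢ[ℝ] EuclideanSpace ℝ (Fin (T + 1)) :=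
      Submodule.reflection Vᗮ with hΦ
    have hodd : ∀ u : Fin (T + 1), u.1 < T → u.1 % 2 = 1 → Φ (x u) = -(x u) := by
      intro u hu hp
      have hxV : x u ∈ V := Submodule.subset_span ⟨u, ⟨hu, hp⟩, rfl⟩
      exact Submodule.reflection_mem_subspace_orthogonalComplement_eq_neg
        (V.le_orthogonal_orthogonal hxV)
    have heven : ∀ u : Fin (T + 1), u.1 < T → u.1 % 2 = 0 → Φ (x u) = x u := by
      intro u hu hp
      apply Submodule.reflection_mem_subspace_eq_self
      rw [Submodule.mem_orthogonal]
      intro w hw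
      rw [hV] at hw
      refine Submodule.span_induction
        (p := fun y _ => (inner ℝ y (x u) : ℝ) = 0) ?_ ?_ ?_ ?_ hw
      · rintro y ⟨v, ⟨hv1, hv2⟩, rfl⟩
        rw [hinner v u]
        exact IH.1 v.1 u.1 hv1 hu (by omega)
      · exact inner_zero_left _
      · intro a b _ _ ha hb
        rw [inner_add_left, ha, hb, add_zero]
      · intro r a _ ha
        rw [real_inner_smul_left, ha, mul_zero]
    -- the flipped matrix A'
    set A' : Matrix (Fin (T + 1)) (Fin (T + 1)) ℝ :=
      Matrix.of (fun u j => (WithLp.equiv 2 _) (Φ (x u)) j) with hA'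
    have hA'A : ∀ t s : Fin (T + 1), (A' * A'.transpose) t s = C t.1 s.1 := by
      intro t s
      calc (A' * A'.transpose) t s
          = ∑ j, (WithLp.equiv 2 _) (Φ (x t)) j * (WithLp.equiv 2 _) (Φ (x s)) j := by
            simp only [Matrix.mul_apply, Matrix.transpose_apply, hA', Matrix.of_apply]
        _ = (inner ℝ (Φ (x t)) (Φ (x s)) : ℝ) := (euclid_inner _ _).symm
        _ = (inner ℝ (x t) (x s) : ℝ) := Φ.inner_map_map _ _
        _ = C t.1 s.1 := hinner t s
    have hA'rows : ∀ (u : ℕ) (hu : u < T + 1), u < T →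
        ∀ j, A' ⟨u, hu⟩ j = (-1 : ℝ) ^ u * A ⟨u, hu⟩ j := by
      intro u hu huT j
      have hAuj : A' ⟨u, hu⟩ j = (WithLp.equiv 2 _) (Φ (x ⟨u, hu⟩)) j := rfl
      rcases Nat.mod_two_eq_zero_or_one u with hp | hp
      · rw [hAuj, heven ⟨u, hu⟩ huT hp, epow]
        simp [hx, hp]
      · rw [hAuj, hodd ⟨u, hu⟩ huT hp, epow]
        simp [hx, hp]
    obtain ⟨hCint, hRder⟩ := h5 A hAA
    obtain ⟨hCint', hRder'⟩ := h5 A' hA'A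
    have hRlow : ∀ u v, u < T → v < u → u % 2 = v % 2 → R u v = 0 :=
      fun u v hu hv hp => IH.2 u v hu hv hp
    constructor
    -- part 1 : vanishing correlations between sublattices
    · intro t s ht hs hp
      have ht' : t ≤ T := by omega
      have hs' : s ≤ T := by omega
      have e1 := hCint t ht' s hs'
      have e2 := hCint' t ht' s hs'
      have hfl := integral_flip (T + 1) (fun ω => effTraj (T + 1) A' R (fun _ => 0) ω t *
        effTraj (T + 1) A' R (fun _ => 0) ω s)
      rw [← hfl] at e2
      have e3 : ∀ ω : Bool × (Fin (T + 1) → ℝ),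
          effTraj (T + 1) A' R (fun _ => 0) (!ω.1, ω.2) t *
            effTraj (T + 1) A' R (fun _ => 0) (!ω.1, ω.2) s
          = -(effTraj (T + 1) A R (fun _ => 0) ω t *
            effTraj (T + 1) A R (fun _ => 0) ω s) := by
        intro ω
        rw [effTraj_flip T R A A' (fun _ => 0) (fun _ => 0) hA'rows
            (fun u _ => by simp) hRlow ω t ht',
          effTraj_flip T R A A' (fun _ => 0) (fun _ => 0) hA'rows
            (fun u _ => by simp) hRlow ω s hs']
        have hc : (-1 : ℝ) ^ (t + 1) * (-1 : ℝ) ^ (s + 1) = -1 := by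
          rw [epow, epow]
          rcases Nat.mod_two_eq_zero_or_one (t + 1) with h1 | h1 <;>
            rcases Nat.mod_two_eq_zero_or_one (s + 1) with h2 | h2 <;>
            rw [h1, h2] <;> norm_num <;> omega
        linear_combination (effTraj (T + 1) A R (fun _ => 0) ω t *
          effTraj (T + 1) A R (fun _ => 0) ω s) * hc
      simp only [e3] at e2
      rw [integral_neg, ← e1] at e2
      linarith
    -- part 2 : vanishing response within a sublattice
    · intro t s ht hst hp
      by_cases htT : t < T
      · exact IH.2 t s htT hst hp
      · have htt : t = T := by omega
        subst htt
        have hd := hRder s t le_rfl hst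
        have hd' := hRder' s t le_rfl hst
        have heq : (fun x : ℝ => ∫ ω, effTraj (t + 1) A' R
              (fun u => if u = s then x else 0) ω t ∂ effMeasure (t + 1))
            = fun x : ℝ => (-1 : ℝ) ^ (t + 1) * ∫ ω, effTraj (t + 1) A R
              (fun u => if u = s then (-1 : ℝ) ^ s * x else 0) ω t ∂ effMeasure (t + 1) := by
          funext x
          have hfl := integral_flip (t + 1) (fun ω => effTraj (t + 1) A' R
            (fun u => if u = s then x else 0) ω t)
          rw [← hfl]
          have e4 : ∀ ω : Bool × (Fin (t + 1) → ℝ),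
              effTraj (t + 1) A' R (fun u => if u = s then x else 0) (!ω.1, ω.2) t
              = (-1 : ℝ) ^ (t + 1) * effTraj (t + 1) A R
                (fun u => if u = s then (-1 : ℝ) ^ s * x else 0) ω t := by
            intro ω
            refine effTraj_flip t R A A' (fun u => if u = s then (-1 : ℝ) ^ s * x else 0) (fun u => if u = s then x else 0) hA'rows ?_ hRlow ω t le_rfl
            intro u hu
            by_cases hus : u = s
            · subst hus
              rw [if_pos rfl, if_pos rfl, ← mul_assoc]
              have hsq : (-1 : ℝ) ^ u * (-1 : ℝ) ^ u = 1 := by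
                rw [epow]; split_ifs <;> norm_num
              rw [hsq, one_mul]
            · simp [hus]
          simp only [e4]
          rw [integral_const_mul]
        rw [heq] at hd'
        have hinner' : HasDerivAt (fun y : ℝ => (-1 : ℝ) ^ s * y) ((-1 : ℝ) ^ s) 0 := by
          simpa using (hasDerivAt_id (0 : ℝ)).const_mul ((-1 : ℝ) ^ s)
        have hd0 : HasDerivAt (fun y : ℝ => ∫ ω, effTraj (t + 1) A R
            (fun u => if u = s then y else 0) ω t ∂ effMeasure (t + 1)) (R t s)
            ((-1 : ℝ) ^ s * 0) := by
          rw [mul_zero]; exact hd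
        have hfd : HasDerivAt (fun y : ℝ => ∫ ω, effTraj (t + 1) A R
            (fun u => if u = s then (-1 : ℝ) ^ s * y else 0) ω t ∂ effMeasure (t + 1))
            (R t s * (-1 : ℝ) ^ s) 0 := HasDerivAt.comp (0 : ℝ) hd0 hinner'
        have hfd2 : HasDerivAt (fun y : ℝ => (-1 : ℝ) ^ (t + 1) * ∫ ω, effTraj (t + 1) A R
            (fun u => if u = s then (-1 : ℝ) ^ s * y else 0) ω t ∂ effMeasure (t + 1))
            ((-1 : ℝ) ^ (t + 1) * (R t s * (-1 : ℝ) ^ s)) 0 :=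
          hfd.const_mul _
        have huniq := hd'.unique hfd2
        have hc : (-1 : ℝ) ^ (t + 1) * (-1 : ℝ) ^ s = -1 := by
          rw [epow, epow]
          rcases Nat.mod_two_eq_zero_or_one (t + 1) with h1' | h1' <;>
            rcases Nat.mod_two_eq_zero_or_one s with h2' | h2' <;>
            rw [h1', h2'] <;> norm_num <;> omega
        have hfin : R t s = -(R t s) :=
          huniq.trans (by linear_combination (R t s) * hc)
        linarith

/-- parity structure of the cavity process: C(t,s) = 0 when t and s have
different parity, and R(t,s) = 0 (for s < t) when t and s have the same parity. -/
theorem cavity_parity (C R : ℕ → ℕ → ℝ) (hcav : ∀ T, IsCavityPair C R T) :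
    (∀ t s : ℕ, t % 2 ≠ s % 2 → C t s = 0) ∧
    (∀ t s : ℕ, s < t → t % 2 = s % 2 → R t s = 0) := by
  constructor
  · intro t s hp
    exact (cavity_parity_aux C R hcav (max t s + 1)).1 t s (by omega) (by omega) hp
  · intro t s hst hp
    exact (cavity_parity_aux C R hcav (t + 1)).2 t s (by omega) hst hp
end
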